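/- Let r ∈ ℕ, let 0 ≤ k_1 < k_2 < k_3 = r be integers, and let M_{k_1}, M_{k_2}, M_r be positive numbers. Then there exists a function x ∈ L^{r,r}_{∞,∞}(ℝ₋) with ‖x^{(k_1)}‖ = M_{k_1}, ‖x^{(k_2)}‖ = M_{k_2} and ‖x^{(r)}‖ = M_r if and only if M_{k_1} ≥ ((r−k_2)!^{(r−k_1)/(r−k_2)} / (r−k_1)!) · M_{k_2}^{(r−k_1)/(r−k_2)} · M_r^{(k_1−k_2)/(r−k_2)}. -/

import Mathlib

open Set

/-- The "norm" of the k-th derivative of `x` on the half-line `ℝ₋ = (-∞,0]`: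
for `k < r` it is the (essential) sup of `|x^{(k)}|` on `ℝ₋` (derivatives taken within `ℝ₋`);
for `k = r` it is the least Lipschitz constant of `x^{(r-1)}` on `ℝ₋`, which equals the
essential sup norm of the a.e. derivative `x^{(r)}`. -/
noncomputable def nrm (r k : ℕ) (x : ℝ → ℝ) : ℝ :=
  if k = r then
    sInf {L : ℝ | 0 ≤ L ∧ LipschitzOnWith (Real.toNNReal L)
      (iteratedDerivWithin (r - 1) x (Set.Iic 0)) (Set.Iic 0)}
  else
    sSup ((fun t => |iteratedDerivWithin k x (Set.Iic 0) t|) '' Set.Iic 0)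

/-- The class `L^{r,r}_{∞,∞}(ℝ₋)` of `r`-monotone functions: `x` has derivatives up to order
`r-1` on `ℝ₋`, `x^{(r-1)}` is Lipschitz on `ℝ₋` (equivalently, it is locally absolutely
continuous with essentially bounded a.e. derivative `x^{(r)}`), `x` is bounded,
`x^{(k)} ≥ 0` on `ℝ₋` for `k = 0,…,r-1`, and `x^{(r)} ≥ 0` a.e.
(equivalently, `x^{(r-1)}` is nondecreasing on `ℝ₋`). -/
def MemLrr (r : ℕ) (x : ℝ → ℝ) : Prop :=
  ContDiffOn ℝ (r - 1 : ℕ) x (Set.Iic 0) ∧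
  (∃ L : NNReal, LipschitzOnWith L (iteratedDerivWithin (r - 1) x (Set.Iic 0)) (Set.Iic 0)) ∧
  BddAbove ((fun t => |x t|) '' Set.Iic 0) ∧
  (∀ k, k < r → ∀ t ∈ Set.Iic (0 : ℝ), 0 ≤ iteratedDerivWithin k x (Set.Iic 0) t) ∧
  MonotoneOn (iteratedDerivWithin (r - 1) x (Set.Iic 0)) (Set.Iic 0)

/-- The spline `φ(a_1,…,a_s,l;t) = (l/r!) ∑_{j=1}^s (-1)^{j+1} (t+a_j)_+^r`
(here `a` is 0-indexed: `a 0 = a_1`, …, `a (s-1) = a_s`). -/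
noncomputable def splineFun (r s : ℕ) (a : ℕ → ℝ) (l : ℝ) : ℝ → ℝ :=
  fun t => (l / (Nat.factorial r : ℝ)) *
    ∑ j ∈ Finset.range s, (-1 : ℝ) ^ j * (max (t + a j) 0) ^ r

/-- `φ ∈ Φ_{r,n}`: `φ` is a spline of order `r` with `s` knots, `1 ≤ s ≤ n`,
`a_1 > a_2 > … > a_s > 0` and `l > 0`. -/
def IsSpline (r n : ℕ) (φ : ℝ → ℝ) : Prop :=
  ∃ s : ℕ, 1 ≤ s ∧ s ≤ n ∧
    ∃ (a : ℕ → ℝ) (l : ℝ),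
      (∀ i j, i < j → j < s → a j < a i) ∧ (∀ j, j < s → 0 < a j) ∧ 0 < l ∧
      φ = splineFun r s a l

/-- The tuple `(M_{k_lo},…,M_{k_d})` of positive numbers is admissible for
`L^{r,r}_{∞,∞}(ℝ₋)` and the orders `k_lo < … < k_d`. -/
def Admissible (r d lo : ℕ) (k : ℕ → ℕ) (M : ℕ → ℝ) : Prop :=
  ∃ x : ℝ → ℝ, MemLrr r x ∧ ∀ i, lo ≤ i → i ≤ d → nrm r (k i) x = M i

/-- Type 1 admissible set (for the tuple of orders `k_lo,…,k_d`, of length `d-lo+1`):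
some spline in `Φ_{r,d-lo} \ Φ_{r,d-lo-1}` realizes the prescribed norms. -/
def Type1 (r d lo : ℕ) (k : ℕ → ℕ) (M : ℕ → ℝ) : Prop :=
  Admissible r d lo k M ∧
  ∃ φ : ℝ → ℝ, IsSpline r (d - lo) φ ∧ ¬ IsSpline r (d - lo - 1) φ ∧
    ∀ i, lo ≤ i → i ≤ d → nrm r (k i) φ = M i

/-- Type 2 admissible set: some spline in `Φ_{r,d-lo-1}` realizes the prescribed norms. -/
def Type2 (r d lo : ℕ) (k : ℕ → ℕ) (M : ℕ → ℝ) : Prop :=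
  Admissible r d lo k M ∧
  ∃ φ : ℝ → ℝ, IsSpline r (d - lo - 1) φ ∧
    ∀ i, lo ≤ i → i ≤ d → nrm r (k i) φ = M i

/-- Type 3 admissible set: `k_lo = 0`, the set is not of Type 1, and some spline
`φ ∈ Φ_{r,d-lo}` plus a constant `C > 0` realizes the prescribed norms. -/
def Type3 (r d lo : ℕ) (k : ℕ → ℕ) (M : ℕ → ℝ) : Prop :=
  Admissible r d lo k M ∧ k lo = 0 ∧ ¬ Type1 r d lo k M ∧
  ∃ (φ : ℝ → ℝ) (C : ℝ), IsSpline r (d - lo) φ ∧ 0 < C ∧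
    ∀ i, lo ≤ i → i ≤ d → nrm r (k i) (fun t => φ t + C) = M i
/-! ### Auxiliary: plus-power functions -/

noncomputable def pp (a : ℝ) (n : ℕ) : ℝ → ℝ := fun t => max (t + a) 0 ^ n

lemma pp_nonneg (a : ℝ) (n : ℕ) (t : ℝ) : 0 ≤ pp a n t :=
  pow_nonneg (le_max_right _ _) n

lemma pp_continuous (a : ℝ) (n : ℕ) : Continuous (pp a n) :=
  ((continuous_id.add continuous_const).max continuous_const).pow n

lemma pp_hasDerivAt (a : ℝ) (n : ℕ) (hn : 1 ≤ n) (t : ℝ) :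
    HasDerivAt (pp a (n + 1)) ((n + 1) * pp a n t) t := by
  have hn0 : n ≠ 0 := by omega
  rcases lt_trichotomy (t + a) 0 with h | h | h
  · have hev : pp a (n+1) =ᶠ[nhds t] (fun _ => (0:ℝ)) := by
      have : ∀ᶠ s in nhds t, s + a < 0 :=
        (continuous_id.add continuous_const).continuousAt.eventually_lt
          continuous_const.continuousAt h
      filter_upwards [this] with s hs
      simp [pp, max_eq_right hs.le]
    have h0 : HasDerivAt (fun _ : ℝ => (0:ℝ)) 0 t := hasDerivAt_const _ _
    have h1 := h0.congr_of_eventuallyEq hev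
    refine h1.congr_deriv ?_
    simp [pp, max_eq_right h.le, zero_pow hn0]
  · have hppt : pp a n t = 0 := by simp [pp, h, zero_pow hn0]
    rw [hppt, mul_zero]
    rw [hasDerivAt_iff_tendsto_slope]
    have hb : ∀ s : ℝ, ‖slope (pp a (n+1)) t s‖ ≤ |s - t| ^ n := by
      intro s
      rcases eq_or_ne s t with rfl | hst
      · simp [slope_def_field]
      · have hst' : s - t ≠ 0 := sub_ne_zero.mpr hst
        have hpt : pp a (n+1) t = 0 := by simp [pp, h]
        have hsa : s + a = s - t := by linarith [h]
        have hb1 : |pp a (n+1) s| ≤ |s - t| ^ (n+1) := by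
          rw [abs_of_nonneg (pp_nonneg _ _ _)]
          have : max (s + a) 0 ≤ |s - t| := by
            rw [← hsa]; exact max_le (le_abs_self _) (abs_nonneg _)
          exact pow_le_pow_left₀ (le_max_right _ _) this _
        rw [slope_def_field, hpt, sub_zero, Real.norm_eq_abs, abs_div]
        rw [div_le_iff₀ (abs_pos.mpr hst')]
        calc |pp a (n+1) s| ≤ |s - t| ^ (n+1) := hb1
          _ = |s - t| ^ n * |s - t| := pow_succ _ _
    refine squeeze_zero_norm hb ?_
    have hc : Continuous fun s : ℝ => |s - t| ^ n :=
      ((continuous_id.sub continuous_const).abs).pow n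
    have h2 := hc.tendsto t
    simp only [sub_self, abs_zero, zero_pow hn0] at h2
    exact h2.mono_left nhdsWithin_le_nhds
  · have hev : pp a (n+1) =ᶠ[nhds t] (fun s => (s + a) ^ (n+1)) := by
      have : ∀ᶠ s in nhds t, 0 < s + a :=
        continuous_const.continuousAt.eventually_lt
          (continuous_id.add continuous_const).continuousAt h
      filter_upwards [this] with s hs
      simp [pp, max_eq_left hs.le]
    have h0 : HasDerivAt (fun s : ℝ => (s + a) ^ (n+1)) ((n+1) * (t + a) ^ n) t := by
      have := ((hasDerivAt_id t).add_const a).fun_pow (n+1)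
      simpa using this
    have h1 := h0.congr_of_eventuallyEq hev
    refine h1.congr_deriv ?_
    simp [pp, max_eq_left h.le]

lemma pp_contDiff (a : ℝ) (m : ℕ) : ContDiff ℝ m (pp a (m + 1)) := by
  induction m with
  | zero => exact contDiff_zero.mpr (pp_continuous a 1)
  | succ m ih =>
    have hcast : ((m + 1 : ℕ) : WithTop ℕ∞) = (m : WithTop ℕ∞) + 1 := by push_cast; rfl
    rw [hcast, contDiff_succ_iff_deriv]
    have hd : ∀ t, HasDerivAt (pp a (m+2)) (((m+1 : ℕ) + 1 : ℝ) * pp a (m+1) t) t :=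
      fun t => pp_hasDerivAt a (m+1) (by omega) t
    refine ⟨fun t => (hd t).differentiableAt, by simp, ?_⟩
    have : deriv (pp a (m+2)) = fun t => ((m+1 : ℕ) + 1 : ℝ) * pp a (m+1) t := by
      funext t; exact (hd t).deriv
    rw [this]
    exact contDiff_const.mul ih

lemma pp_one_sub (a b t : ℝ) (hba : b ≤ a) :
    pp a 1 t - pp b 1 t = min (max (t + a) 0) (a - b) := by
  simp only [pp, pow_one]
  rcases le_total (t + b) 0 with h | h
  · rw [max_eq_right h, sub_zero]
    rcases le_total (t + a) 0 with h' | h'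
    · rw [max_eq_right h', min_eq_left (by linarith)]
    · rw [max_eq_left h', min_eq_left (by linarith)]
  · rw [max_eq_left h, max_eq_left (by linarith), min_eq_right (by linarith)]
    ring

lemma pp_one_sub_mono (a b : ℝ) (hba : b ≤ a) : Monotone (fun t => pp a 1 t - pp b 1 t) := by
  have : (fun t => pp a 1 t - pp b 1 t) = fun t => min (max (t + a) 0) (a - b) := by
    funext t; exact pp_one_sub a b t hba
  rw [this]
  exact (((monotone_id.add_const a).max monotone_const).min monotone_const)

lemma pp_one_incr (a s t : ℝ) (hst : s ≤ t) : pp a 1 t - pp a 1 s ≤ t - s := by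
  simp only [pp, pow_one]
  rcases le_total (s + a) 0 with h | h
  · rw [max_eq_right h]
    exact sub_le_iff_le_add.mpr (max_le (by linarith) (by linarith))
  · rw [max_eq_left h, max_eq_left (by linarith)]; linarith

lemma pp_le_pp (a b : ℝ) (n : ℕ) (hba : b ≤ a) (t : ℝ) : pp b n t ≤ pp a n t :=
  pow_le_pow_left₀ (le_max_right _ _) (max_le_max (by linarith) le_rfl) n

lemma ppdiff_mono (a b : ℝ) (hba : b ≤ a) {n : ℕ} (hn : 1 ≤ n) :
    Monotone (fun t => pp a n t - pp b n t) := by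
  match n, hn with
  | 1, _ => exact pp_one_sub_mono a b hba
  | (m+2), _ =>
    have hd : ∀ t, HasDerivAt (fun s => pp a (m+2) s - pp b (m+2) s)
        (((m+1 : ℕ) + 1 : ℝ) * pp a (m+1) t - ((m+1 : ℕ) + 1 : ℝ) * pp b (m+1) t) t :=
      fun t => (pp_hasDerivAt a (m+1) (by omega) t).sub (pp_hasDerivAt b (m+1) (by omega) t)
    apply monotone_of_deriv_nonneg (fun t => (hd t).differentiableAt)
    intro t
    rw [(hd t).deriv]
    have := pp_le_pp a b (m+1) hba t
    have hc : (0:ℝ) ≤ ((m+1 : ℕ) + 1 : ℝ) := by positivity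
    nlinarith

/-! ### Within-derivatives on `Iic 0` agree with global derivatives for `C^n` functions -/

lemma itdW_eq_itd {f : ℝ → ℝ} {n : ℕ} (h : ContDiff ℝ (n : ℕ∞) f) :
    ∀ m : ℕ, m ≤ n → Set.EqOn (iteratedDerivWithin m f (Iic (0:ℝ))) (iteratedDeriv m f) (Iic 0) := by
  intro m
  induction m with
  | zero => intro _; simp [iteratedDerivWithin_zero, iteratedDeriv_zero, Set.EqOn]
  | succ m ih =>
    intro hm x hx
    have hm' : m ≤ n := by omega
    rw [iteratedDerivWithin_succ]
    rw [derivWithin_congr (ih hm') (ih hm' hx)]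
    have hdiff : DifferentiableAt ℝ (iteratedDeriv m f) x := by
      have := h.differentiable_iteratedDeriv m
        (by exact_mod_cast Nat.lt_of_lt_of_le (Nat.lt_succ_self m) hm)
      exact this.differentiableAt
    rw [hdiff.derivWithin ((uniqueDiffOn_Iic 0) x hx)]
    rw [iteratedDeriv_succ]

/-! ### The two-knot spline -/

noncomputable def spl (c a b : ℝ) (r : ℕ) : ℝ → ℝ := fun t => c * (pp a r t - pp b r t)

lemma spl_contDiff (c a b : ℝ) {r : ℕ} (hr : 1 ≤ r) :
    ContDiff ℝ ((r - 1 : ℕ) : ℕ∞) (spl c a b r) := by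
  have e : r = (r - 1) + 1 := by omega
  rw [show spl c a b r = spl c a b ((r-1)+1) from by rw [← e]]
  exact (contDiff_const.mul ((pp_contDiff a (r-1)).sub (pp_contDiff b (r-1)))).of_le le_rfl

lemma spl_iteratedDeriv (c a b : ℝ) {r k : ℕ} (hk : k + 1 ≤ r) :
    iteratedDeriv k (spl c a b r) =
      fun t => c * (Nat.descFactorial r k : ℝ) * (pp a (r - k) t - pp b (r - k) t) := by
  induction k with
  | zero => funext t; simp [iteratedDeriv_zero, spl, mul_assoc]
  | succ k ih =>
    have hk' : k + 1 ≤ r := by omega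
    rw [iteratedDeriv_succ, ih hk']
    funext t
    have h1 : 1 ≤ r - k - 1 := by omega
    have e : r - k = (r - k - 1) + 1 := by omega
    have hd : ∀ s, HasDerivAt (fun u => pp a (r - k) u - pp b (r - k) u)
        ((((r - k - 1 : ℕ) : ℝ) + 1) * pp a (r - k - 1) s
          - (((r - k - 1 : ℕ) : ℝ) + 1) * pp b (r - k - 1) s) s := by
      intro s
      have ha := pp_hasDerivAt a (r - k - 1) h1 s
      have hb := pp_hasDerivAt b (r - k - 1) h1 s
      rw [← e] at ha hb
      exact ha.sub hb
    have hD : ∀ s, HasDerivAt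
        (fun u => c * (Nat.descFactorial r k : ℝ) * (pp a (r - k) u - pp b (r - k) u))
        (c * (Nat.descFactorial r k : ℝ) *
          ((((r - k - 1 : ℕ) : ℝ) + 1) * pp a (r - k - 1) s
            - (((r - k - 1 : ℕ) : ℝ) + 1) * pp b (r - k - 1) s)) s :=
      fun s => (hd s).const_mul _
    rw [(hD t).deriv]
    have hrk : r - (k + 1) = r - k - 1 := by omega
    rw [Nat.descFactorial_succ, hrk]
    have hc : (((r - k - 1 : ℕ) : ℝ) + 1) = ((r - k : ℕ) : ℝ) := by
      rw [e]; push_cast; ring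
    rw [hc]
    push_cast
    ring
set_option linter.unusedSectionVars false
set_option linter.unusedVariables false

/-! ### sup-norm of a monotone nonneg function on `Iic 0` -/

lemma csSup_abs_image {g : ℝ → ℝ} (hmono : MonotoneOn g (Iic 0))
    (hnn : ∀ t ∈ Iic (0:ℝ), 0 ≤ g t) :
    sSup ((fun t => |g t|) '' Iic 0) = g 0 := by
  apply IsGreatest.csSup_eq
  constructor
  · exact ⟨0, self_mem_Iic, abs_of_nonneg (hnn 0 self_mem_Iic)⟩
  · rintro y ⟨t, ht, rfl⟩
    show |g t| ≤ g 0
    rw [abs_of_nonneg (hnn t ht)]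
    exact hmono ht self_mem_Iic ht

/-! ### Spline norms and membership -/

section Spline

variable {r : ℕ} {a b l : ℝ}

lemma coeff_eq {k : ℕ} (hk : k ≤ r) (l : ℝ) :
    l / (Nat.factorial r : ℝ) * (Nat.descFactorial r k : ℝ) = l / (Nat.factorial (r - k) : ℝ) := by
  have h := Nat.factorial_mul_descFactorial hk
  have h' : ((r - k).factorial : ℝ) * (Nat.descFactorial r k : ℝ) = (r.factorial : ℝ) := by
    exact_mod_cast congrArg (Nat.cast : ℕ → ℝ) h
  have h1 : (r.factorial : ℝ) ≠ 0 := by positivity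
  have h2 : ((r - k).factorial : ℝ) ≠ 0 := by positivity
  field_simp
  linear_combination l * h'

variable (hr : 2 ≤ r) (hb : 0 ≤ b) (hab : b < a) (hl : 0 < l)

/-- the spline with normalization `l/r!` -/
noncomputable def splx (a b l : ℝ) (r : ℕ) : ℝ → ℝ := spl (l / (Nat.factorial r : ℝ)) a b r

include hr in
lemma splx_itdW {k : ℕ} (hk : k + 1 ≤ r) :
    Set.EqOn (iteratedDerivWithin k (splx a b l r) (Iic 0))
      (fun t => l / (Nat.factorial (r - k) : ℝ) * (pp a (r - k) t - pp b (r - k) t)) (Iic 0) := by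
  intro t ht
  have h1 := itdW_eq_itd (spl_contDiff (l / (Nat.factorial r : ℝ)) a b (by omega : 1 ≤ r))
    k (by omega) ht
  rw [splx, h1, spl_iteratedDeriv _ a b hk, coeff_eq (by omega) l]

include hb hab hl in
lemma splx_deriv_nonneg {k : ℕ} (hk : k + 1 ≤ r) (t : ℝ) :
    0 ≤ l / (Nat.factorial (r - k) : ℝ) * (pp a (r - k) t - pp b (r - k) t) := by
  have h1 := pp_le_pp a b (r - k) hab.le t
  have h2 : (0:ℝ) ≤ l / (Nat.factorial (r - k) : ℝ) := by positivity
  nlinarith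

include hb hab hl in
lemma splx_deriv_mono {k : ℕ} (hk : k + 1 ≤ r) :
    Monotone (fun t => l / (Nat.factorial (r - k) : ℝ) * (pp a (r - k) t - pp b (r - k) t)) := by
  have h2 : (0:ℝ) ≤ l / (Nat.factorial (r - k) : ℝ) := by positivity
  have hm := ppdiff_mono a b hab.le (n := r - k) (by omega)
  intro s t hst
  have := hm hst
  dsimp only at this ⊢
  nlinarith

include hr hb hab hl in
lemma splx_nrm {k : ℕ} (hk : k + 1 ≤ r) :
    nrm r k (splx a b l r) =
      l / (Nat.factorial (r - k) : ℝ) * (a ^ (r - k) - b ^ (r - k)) := by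
  have hkr : k ≠ r := by omega
  rw [nrm, if_neg hkr]
  have himg : (fun t => |iteratedDerivWithin k (splx a b l r) (Iic 0) t|) '' Iic 0 =
      (fun t => |l / (Nat.factorial (r - k) : ℝ) * (pp a (r - k) t - pp b (r - k) t)|) '' Iic 0 := by
    apply image_congr
    intro t ht
    rw [splx_itdW hr hk ht]
  rw [himg, csSup_abs_image ((splx_deriv_mono hb hab hl hk).monotoneOn _)
    (fun t _ => splx_deriv_nonneg hb hab hl hk t)]
  have hpa : pp a (r - k) 0 = a ^ (r - k) := by
    simp [pp, max_eq_left (by linarith : (0:ℝ) ≤ a)]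
  have hpb : pp b (r - k) 0 = b ^ (r - k) := by
    simp [pp, max_eq_left hb]
  simp [hpa, hpb]

lemma ppd_incr (a b : ℝ) (hba : b ≤ a) {s t : ℝ} (hts : t ≤ s) :
    (pp a 1 s - pp b 1 s) - (pp a 1 t - pp b 1 t) ≤ s - t := by
  have h1 := pp_one_incr a t s hts
  have h2 : pp b 1 t ≤ pp b 1 s := by
    simp only [pp, pow_one]
    exact max_le_max (by linarith) le_rfl
  linarith

include hr hb hab hl in
lemma splx_lip :
    LipschitzOnWith (Real.toNNReal l)
      (iteratedDerivWithin (r - 1) (splx a b l r) (Iic 0)) (Iic 0) := by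
  apply LipschitzOnWith.of_dist_le_mul
  intro s hs t ht
  have e : r - (r - 1) = 1 := by omega
  have h1 := splx_itdW (a := a) (b := b) (l := l) hr (k := r - 1) (by omega : r - 1 + 1 ≤ r)
  rw [h1 hs, h1 ht]
  simp only [e]
  have hfact : (Nat.factorial 1 : ℝ) = 1 := by norm_num [Nat.factorial]
  rw [hfact]
  simp only [div_one]
  rw [Real.dist_eq, Real.dist_eq, Real.coe_toNNReal _ hl.le]
  have key : ∀ u v : ℝ, v ≤ u →
      |l * (pp a 1 u - pp b 1 u) - l * (pp a 1 v - pp b 1 v)| ≤ l * |u - v| := by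
    intro u v hvu
    have hmono := pp_one_sub_mono a b hab.le hvu
    dsimp only at hmono
    have hincr := ppd_incr a b hab.le hvu
    rw [abs_of_nonneg (by linarith : (0:ℝ) ≤ u - v)]
    rw [abs_of_nonneg (by nlinarith : (0:ℝ) ≤ l * (pp a 1 u - pp b 1 u) - l * (pp a 1 v - pp b 1 v))]
    nlinarith
  rcases le_total t s with hts | hts
  · exact key s t hts
  · rw [abs_sub_comm, abs_sub_comm s t]
    exact key t s hts

end Spline
section Spline2

variable {r : ℕ} {a b l : ℝ}
variable (hr : 2 ≤ r) (hb : 0 ≤ b) (hab : b < a) (hl : 0 < l)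

include hr hb hab hl in
lemma splx_nrm_top : nrm r r (splx a b l r) = l := by
  rw [nrm, if_pos rfl]
  apply IsLeast.csInf_eq
  constructor
  · exact ⟨hl.le, splx_lip hr hb hab hl⟩
  · rintro L ⟨hL0, hLip⟩
    have hma : (-a : ℝ) ∈ Iic (0:ℝ) := by simp; linarith
    have hmb : (-b : ℝ) ∈ Iic (0:ℝ) := by simp; linarith
    have h1 := splx_itdW (a := a) (b := b) (l := l) hr (k := r - 1) (by omega : r - 1 + 1 ≤ r)
    have e : r - (r - 1) = 1 := by omega
    have hd := hLip.dist_le_mul (-b) hmb (-a) hma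
    rw [h1 hmb, h1 hma] at hd
    simp only [e] at hd
    have hfact : (Nat.factorial 1 : ℝ) = 1 := by norm_num [Nat.factorial]
    rw [hfact] at hd
    simp only [div_one] at hd
    have hva : pp a 1 (-a) = 0 := by simp [pp]
    have hvb : pp b 1 (-a) = 0 := by
      simp only [pp, pow_one]
      rw [max_eq_right (by linarith)]
    have hva' : pp a 1 (-b) = a - b := by
      simp only [pp, pow_one]
      rw [max_eq_left (by linarith)]; ring
    have hvb' : pp b 1 (-b) = 0 := by simp [pp]
    rw [hva, hvb, hva', hvb'] at hd
    rw [Real.dist_eq, Real.dist_eq, Real.coe_toNNReal _ hL0] at hd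
    have hab' : (0:ℝ) < a - b := by linarith
    have : l * (a - b) ≤ L * (a - b) := by
      calc l * (a - b) = |l * (a - b - 0) - l * (0 - 0)| := by
            rw [abs_of_nonneg (by nlinarith)]; ring
        _ ≤ L * |(-b) - (-a)| := hd
        _ = L * (a - b) := by rw [abs_of_nonneg (by linarith)]; ring
    nlinarith

include hr hb hab hl in
lemma splx_mem : MemLrr r (splx a b l r) := by
  refine ⟨?_, ⟨Real.toNNReal l, splx_lip hr hb hab hl⟩, ?_, ?_, ?_⟩
  · exact (spl_contDiff (l / (Nat.factorial r : ℝ)) a b (by omega : 1 ≤ r)).contDiffOn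
  · refine ⟨splx a b l r 0, ?_⟩
    rintro y ⟨t, ht, rfl⟩
    show |splx a b l r t| ≤ splx a b l r 0
    have h0 : ∀ s : ℝ, splx a b l r s =
        l / (Nat.factorial (r - 0) : ℝ) * (pp a (r - 0) s - pp b (r - 0) s) := by
      intro s
      rw [Nat.sub_zero]
      rfl
    rw [h0 t, h0 0]
    rw [abs_of_nonneg (splx_deriv_nonneg hb hab hl (by omega : 0 + 1 ≤ r) t)]
    exact splx_deriv_mono hb hab hl (by omega : 0 + 1 ≤ r) ht
  · intro k hk t ht
    rw [splx_itdW hr (by omega : k + 1 ≤ r) ht]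
    exact splx_deriv_nonneg hb hab hl (by omega) t
  · intro s hs t ht hst
    have h1 := splx_itdW (a := a) (b := b) (l := l) hr (k := r - 1) (by omega : r - 1 + 1 ≤ r)
    rw [h1 hs, h1 ht]
    exact splx_deriv_mono hb hab hl (by omega : (r - 1) + 1 ≤ r) hst

end Spline2
/-! ### Nonnegativity propagation lemma -/

lemma Hlem : ∀ (m : ℕ) (D : ℕ → ℝ → ℝ) (A e : ℝ), A ≤ e →
    (∀ j ≤ m, ContinuousOn (D j) (Icc A e)) →
    (∀ j < m, ∀ t ∈ Ioo A e, HasDerivAt (D j) (D (j+1) t) t) →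
    (∀ j < m, 0 ≤ D j A) →
    AntitoneOn (D m) (Icc A e) →
    0 ≤ D 0 e →
    ∀ t ∈ Icc A e, 0 ≤ D 0 t := by
  intro m
  induction m with
  | zero =>
    intro D A e hAe hcont hder hA hanti he t ht
    exact le_trans he (hanti ht ⟨hAe, le_rfl⟩ ht.2)
  | succ m IH =>
    intro D A e hAe hcont hder hA hanti he t ht
    set S := {v ∈ Icc A e | 0 ≤ D 1 v} with hS
    have hsub1 : ∀ v ∈ S, ∀ s ∈ Icc A v, 0 ≤ D 1 s := by
      rintro v ⟨hv, hv1⟩ s hs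
      have hIccsub : Icc A v ⊆ Icc A e := Icc_subset_Icc le_rfl hv.2
      have hIoosub : Ioo A v ⊆ Ioo A e := Ioo_subset_Ioo le_rfl hv.2
      exact IH (fun j => D (j+1)) A v hv.1
        (fun j hj => (hcont (j+1) (by omega)).mono hIccsub)
        (fun j hj s hs => hder (j+1) (by omega) s (hIoosub hs))
        (fun j hj => hA (j+1) (by omega))
        (fun u hu w hw huw => hanti (hIccsub hu) (hIccsub hw) huw)
        hv1 s hs
    have hne : (insert A S).Nonempty := ⟨A, mem_insert _ _⟩
    have hbdd : BddAbove (insert A S) := by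
      refine ⟨e, ?_⟩
      rintro v (rfl | ⟨hv, _⟩)
      · exact hAe
      · exact hv.2
    set c := sSup (insert A S) with hc
    have hAc : A ≤ c := le_csSup hbdd (mem_insert _ _)
    have hce : c ≤ e := csSup_le hne (by rintro v (rfl | ⟨hv, _⟩); exacts [hAe, hv.2])
    have h1nn : ∀ s ∈ Ico A c, 0 ≤ D 1 s := by
      rintro s ⟨hs1, hs2⟩
      obtain ⟨v, hv, hsv⟩ := exists_lt_of_lt_csSup hne hs2
      rcases hv with rfl | hvS
      · linarith
      · exact hsub1 v hvS s ⟨hs1, hsv.le⟩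
    have h1np : ∀ s ∈ Ioc c e, D 1 s ≤ 0 := by
      rintro s ⟨hs1, hs2⟩
      by_contra hpos
      push_neg at hpos
      have : s ∈ S := ⟨⟨le_trans hAc hs1.le, hs2⟩, hpos.le⟩
      have : s ≤ c := le_csSup hbdd (mem_insert_of_mem _ this)
      linarith
    have hmono : MonotoneOn (D 0) (Icc A c) := by
      apply monotoneOn_of_deriv_nonneg (convex_Icc A c)
        ((hcont 0 (by omega)).mono (Icc_subset_Icc le_rfl hce))
      · intro s hs
        rw [interior_Icc] at hs
        exact ((hder 0 (by omega) s ⟨hs.1, lt_of_lt_of_le hs.2 hce⟩).differentiableAt).differentiableWithinAt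
      · intro s hs
        rw [interior_Icc] at hs
        rw [(hder 0 (by omega) s ⟨hs.1, lt_of_lt_of_le hs.2 hce⟩).deriv]
        exact h1nn s ⟨hs.1.le, hs.2⟩
    have hanti0 : AntitoneOn (D 0) (Icc c e) := by
      apply antitoneOn_of_deriv_nonpos (convex_Icc c e)
        ((hcont 0 (by omega)).mono (Icc_subset_Icc hAc le_rfl))
      · intro s hs
        rw [interior_Icc] at hs
        exact ((hder 0 (by omega) s ⟨lt_of_le_of_lt hAc hs.1, hs.2⟩).differentiableAt).differentiableWithinAt
      · intro s hs
        rw [interior_Icc] at hs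
        rw [(hder 0 (by omega) s ⟨lt_of_le_of_lt hAc hs.1, hs.2⟩).deriv]
        exact h1np s ⟨hs.1, hs.2.le⟩
    rcases le_total t c with htc | htc
    · exact le_trans (hA 0 (by omega)) (hmono ⟨le_rfl, hAc⟩ ⟨ht.1, htc⟩ ht.1)
    · exact le_trans he (hanti0 ⟨htc, ht.2⟩ ⟨hce, le_rfl⟩ ht.2)

/-! ### Consequences of membership in the class -/

section Fwd

variable {r : ℕ} {x : ℝ → ℝ}

/-- abbreviation for the within-derivatives of `x` -/
local notation "D" => fun j => iteratedDerivWithin j x (Iic (0:ℝ))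

lemma mem_cont (hx : MemLrr r x) {j : ℕ} (hj : j ≤ r - 1) :
    ContinuousOn (iteratedDerivWithin j x (Iic (0:ℝ))) (Iic 0) :=
  hx.1.continuousOn_iteratedDerivWithin (by exact_mod_cast hj) (uniqueDiffOn_Iic 0)

lemma mem_hasDerivAt (hx : MemLrr r x) {j : ℕ} (hj : j < r - 1) {t : ℝ} (ht : t < 0) :
    HasDerivAt (iteratedDerivWithin j x (Iic (0:ℝ)))
      (iteratedDerivWithin (j+1) x (Iic (0:ℝ)) t) t := by
  have hd : DifferentiableWithinAt ℝ (iteratedDerivWithin j x (Iic (0:ℝ))) (Iic 0) t :=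
    hx.1.differentiableOn_iteratedDerivWithin (by exact_mod_cast hj) (uniqueDiffOn_Iic 0)
      t (le_of_lt ht)
  have h1 : HasDerivWithinAt (iteratedDerivWithin j x (Iic (0:ℝ)))
      (derivWithin (iteratedDerivWithin j x (Iic (0:ℝ))) (Iic 0) t) (Iic 0) t :=
    hd.hasDerivWithinAt
  rw [← iteratedDerivWithin_succ] at h1
  exact h1.hasDerivAt (Iic_mem_nhds ht)

lemma mem_mono (hx : MemLrr r x) (hr : 2 ≤ r) {j : ℕ} (hj : j ≤ r - 1) :
    MonotoneOn (iteratedDerivWithin j x (Iic (0:ℝ))) (Iic 0) := by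
  rcases eq_or_lt_of_le hj with rfl | hj'
  · exact hx.2.2.2.2
  · apply monotoneOn_of_deriv_nonneg (convex_Iic 0) (mem_cont hx hj)
    · intro s hs
      rw [interior_Iic] at hs
      exact (mem_hasDerivAt hx hj' hs).differentiableAt.differentiableWithinAt
    · intro s hs
      rw [interior_Iic] at hs
      rw [(mem_hasDerivAt hx hj' hs).deriv]
      exact hx.2.2.2.1 (j+1) (by omega) s (mem_Iic.mpr hs.le)

lemma mem_nrm_eq (hx : MemLrr r x) (hr : 2 ≤ r) {k : ℕ} (hk : k < r) :
    nrm r k x = iteratedDerivWithin k x (Iic (0:ℝ)) 0 := by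
  rw [nrm, if_neg (by omega)]
  exact csSup_abs_image (mem_mono hx hr (by omega)) (fun t ht => hx.2.2.2.1 k hk t ht)

lemma mem_nrm_top_nonneg (hx : MemLrr r x) : 0 ≤ nrm r r x := by
  rw [nrm, if_pos rfl]
  obtain ⟨L, hL⟩ := hx.2.1
  refine le_csInf ⟨(L : ℝ), ⟨L.coe_nonneg, by rwa [Real.toNNReal_coe]⟩⟩ ?_
  rintro b ⟨hb, _⟩
  exact hb

lemma mem_lip (hx : MemLrr r x) {s t : ℝ} (hs : s ∈ Iic (0:ℝ)) (ht : t ∈ Iic (0:ℝ)) :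
    |iteratedDerivWithin (r-1) x (Iic (0:ℝ)) t - iteratedDerivWithin (r-1) x (Iic (0:ℝ)) s|
      ≤ nrm r r x * |t - s| := by
  rw [nrm, if_pos rfl]
  obtain ⟨L0, hL0⟩ := hx.2.1
  set S := {L : ℝ | 0 ≤ L ∧ LipschitzOnWith (Real.toNNReal L)
      (iteratedDerivWithin (r - 1) x (Iic 0)) (Iic 0)} with hSdef
  have hne : S.Nonempty := ⟨(L0 : ℝ), ⟨L0.coe_nonneg, by rwa [Real.toNNReal_coe]⟩⟩
  have hbound : ∀ L ∈ S, |iteratedDerivWithin (r-1) x (Iic (0:ℝ)) t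
      - iteratedDerivWithin (r-1) x (Iic (0:ℝ)) s| ≤ L * |t - s| := by
    rintro L ⟨hL1, hL2⟩
    have := hL2.dist_le_mul t ht s hs
    rw [Real.dist_eq, Real.dist_eq, Real.coe_toNNReal _ hL1] at this
    exact this
  rcases eq_or_ne t s with rfl | hts
  · simp
  · have habs : 0 < |t - s| := abs_pos.mpr (sub_ne_zero.mpr hts)
    have h1 : |iteratedDerivWithin (r-1) x (Iic (0:ℝ)) t
        - iteratedDerivWithin (r-1) x (Iic (0:ℝ)) s| / |t - s| ≤ sInf S :=
      le_csInf hne (fun L hL => (div_le_iff₀ habs).mpr (hbound L hL))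
    calc |iteratedDerivWithin (r-1) x (Iic (0:ℝ)) t - iteratedDerivWithin (r-1) x (Iic (0:ℝ)) s|
        = |iteratedDerivWithin (r-1) x (Iic (0:ℝ)) t
            - iteratedDerivWithin (r-1) x (Iic (0:ℝ)) s| / |t - s| * |t - s| := by
          field_simp
      _ ≤ sInf S * |t - s| := by
          apply mul_le_mul_of_nonneg_right h1 (abs_nonneg _)

end Fwd
/-! ### Comparison with the extremal spline -/

lemma fact_step {n : ℕ} (hn : 1 ≤ n) (c : ℝ) :
    c / (Nat.factorial n : ℝ) * n = c / (Nat.factorial (n - 1) : ℝ) := by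
  obtain ⟨m, rfl⟩ : ∃ m, n = m + 1 := ⟨n - 1, by omega⟩
  simp only [Nat.add_sub_cancel, Nat.factorial_succ]
  have h1 : ((m+1 : ℕ) : ℝ) ≠ 0 := by positivity
  have h2 : (Nat.factorial m : ℝ) ≠ 0 := by positivity
  push_cast
  field_simp

section Compare

variable {r k1 k2 : ℕ} {x : ℝ → ℝ}

lemma compare_k2 (h2r : k2 < r) (hr : 2 ≤ r) (hx : MemLrr r x)
    {A : ℝ} (hA : 0 ≤ A)
    (hval : iteratedDerivWithin k2 x (Iic 0) 0 =
      nrm r r x / ((r - k2).factorial : ℝ) * A ^ (r - k2)) :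
    ∀ t ∈ Icc (-A) (0:ℝ),
      nrm r r x / ((r - k2).factorial : ℝ) * (t + A) ^ (r - k2)
        ≤ iteratedDerivWithin k2 x (Iic 0) t := by
  set Mr := nrm r r x with hMrdef
  set p := r - k2 with hp
  have hp1 : 1 ≤ p := by omega
  have hIccIic : Icc (-A) (0:ℝ) ⊆ Iic 0 := fun s hs => hs.2
  have key := Hlem (p - 1)
    (fun j t => iteratedDerivWithin (k2 + j) x (Iic 0) t
      - Mr / ((p - j).factorial : ℝ) * (t + A) ^ (p - j))
    (-A) 0 (by linarith) ?_ ?_ ?_ ?_ ?_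
  · intro t ht
    have := key t ht
    simp only [Nat.add_zero, Nat.sub_zero] at this
    linarith
  · -- continuity
    intro j hj
    apply ContinuousOn.sub
    · exact (mem_cont hx (by omega : k2 + j ≤ r - 1)).mono hIccIic
    · exact (continuous_const.mul (((continuous_id.add continuous_const)).pow _)).continuousOn
  · -- derivatives
    intro j hj t ht
    have hd1 := mem_hasDerivAt hx (by omega : k2 + j < r - 1) ht.2
    have hd2 : HasDerivAt (fun s : ℝ => Mr / ((p - j).factorial : ℝ) * (s + A) ^ (p - j))
        (Mr / ((p - (j+1)).factorial : ℝ) * (t + A) ^ (p - (j+1))) t := by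
      have h0 := (((hasDerivAt_id t).add_const A).pow (p - j)).const_mul
        (Mr / ((p - j).factorial : ℝ))
      have e1 : p - j - 1 = p - (j + 1) := by omega
      have e2 : Mr / ((p - j).factorial : ℝ) * (((p - j : ℕ) : ℝ) * (t + A) ^ (p - j - 1) * 1)
          = Mr / ((p - (j+1)).factorial : ℝ) * (t + A) ^ (p - (j+1)) := by
        rw [mul_one, e1.symm, ← mul_assoc, mul_comm (Mr / ((p - j).factorial : ℝ)) _,
          mul_comm (((p - j : ℕ) : ℝ)) _]
        rw [fact_step (by omega : 1 ≤ p - j) Mr]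
      rw [← e2]
      exact h0
    have e3 : k2 + (j + 1) = k2 + j + 1 := by omega
    show HasDerivAt (fun s => iteratedDerivWithin (k2+j) x (Iic 0) s
        - Mr / ((p-j).factorial : ℝ) * (s+A)^(p-j))
      (iteratedDerivWithin (k2+(j+1)) x (Iic 0) t
        - Mr / ((p-(j+1)).factorial : ℝ) * (t+A)^(p-(j+1))) t
    rw [e3]
    exact hd1.sub hd2
  · -- values at -A
    intro j hj
    have hz : (-A + A : ℝ) = 0 := by ring
    have : ((-A : ℝ) + A) ^ (p - j) = 0 := by
      rw [hz]
      exact zero_pow (by omega)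
    simp only [this, mul_zero, sub_zero]
    exact hx.2.2.2.1 (k2 + j) (by omega) (-A) (by simp; linarith)
  · -- antitone at top level
    intro u hu w hw huw
    have e4 : k2 + (p - 1) = r - 1 := by omega
    have e5 : p - (p - 1) = 1 := by omega
    simp only [e4, e5, pow_one]
    have hlip := mem_lip hx (hIccIic hu) (hIccIic hw)
    have h1 : iteratedDerivWithin (r-1) x (Iic 0) w - iteratedDerivWithin (r-1) x (Iic 0) u
        ≤ Mr * (w - u) := by
      have := le_trans (le_abs_self _) hlip
      rwa [abs_of_nonneg (by linarith : (0:ℝ) ≤ w - u)] at this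
    have hfact : (Nat.factorial 1 : ℝ) = 1 := by norm_num [Nat.factorial]
    rw [hfact]
    simp only [div_one]
    nlinarith
  · -- value at 0
    simp only [Nat.add_zero, Nat.sub_zero, zero_add]
    rw [hval]
    simp

lemma compare_down (h12 : k1 < k2) (h2r : k2 < r) (hr : 2 ≤ r) (hx : MemLrr r x)
    {A : ℝ} (hA : 0 ≤ A)
    (hval : iteratedDerivWithin k2 x (Iic 0) 0 =
      nrm r r x / ((r - k2).factorial : ℝ) * A ^ (r - k2)) :
    ∀ i ≤ k2 - k1, ∀ t ∈ Icc (-A) (0:ℝ),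
      nrm r r x / ((r - k2 + i).factorial : ℝ) * (t + A) ^ (r - k2 + i)
        ≤ iteratedDerivWithin (k2 - i) x (Iic 0) t := by
  set Mr := nrm r r x with hMrdef
  have hIccIic : Icc (-A) (0:ℝ) ⊆ Iic 0 := fun s hs => hs.2
  intro i
  induction i with
  | zero =>
    intro _ t ht
    simpa using compare_k2 h2r hr hx hA hval t ht
  | succ i IH =>
    intro hi t ht
    have hi' : i ≤ k2 - k1 := by omega
    set n := r - k2 + i with hn
    have hn1 : 1 ≤ n + 1 := by omega
    set g := fun s : ℝ => iteratedDerivWithin (k2 - (i+1)) x (Iic 0) s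
      - Mr / ((n+1).factorial : ℝ) * (s + A) ^ (n+1) with hg
    have hder : ∀ s ∈ Ioo (-A) (0:ℝ), HasDerivAt g
        (iteratedDerivWithin (k2 - i) x (Iic 0) s
          - Mr / (n.factorial : ℝ) * (s + A) ^ n) s := by
      intro s hs
      have e1 : k2 - (i+1) + 1 = k2 - i := by omega
      have hd1 := mem_hasDerivAt hx (by omega : k2 - (i+1) < r - 1) hs.2
      rw [e1] at hd1
      have hd2 : HasDerivAt (fun u : ℝ => Mr / ((n+1).factorial : ℝ) * (u + A) ^ (n+1))
          (Mr / (n.factorial : ℝ) * (s + A) ^ n) s := by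
        have h0 := (((hasDerivAt_id s).add_const A).pow (n+1)).const_mul
          (Mr / ((n+1).factorial : ℝ))
        have e2 : Mr / ((n+1).factorial : ℝ) * (((n + 1 : ℕ) : ℝ) * (s + A) ^ (n + 1 - 1) * 1)
            = Mr / (n.factorial : ℝ) * (s + A) ^ n := by
          rw [mul_one, Nat.add_sub_cancel, ← mul_assoc,
            mul_comm (Mr / ((n+1).factorial : ℝ)) _, mul_comm (((n + 1 : ℕ) : ℝ)) _]
          rw [fact_step (by omega : 1 ≤ n + 1) Mr]
          norm_num
        rw [← e2]
        exact h0
      exact hd1.sub hd2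
    have hmono : MonotoneOn g (Icc (-A) (0:ℝ)) := by
      apply monotoneOn_of_deriv_nonneg (convex_Icc _ _)
      · apply ContinuousOn.sub
        · exact (mem_cont hx (by omega : k2 - (i+1) ≤ r - 1)).mono hIccIic
        · exact (continuous_const.mul (((continuous_id.add continuous_const)).pow _)).continuousOn
      · intro s hs
        rw [interior_Icc] at hs
        exact ((hder s hs).differentiableAt).differentiableWithinAt
      · intro s hs
        rw [interior_Icc] at hs
        rw [(hder s hs).deriv]
        have := IH hi' s ⟨hs.1.le, hs.2.le⟩
        linarith
    have hgA : 0 ≤ g (-A) := by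
      have hz : ((-A : ℝ) + A) ^ (n+1) = 0 := by
        rw [show (-A + A : ℝ) = 0 by ring]
        exact zero_pow (by omega)
      have := hx.2.2.2.1 (k2 - (i+1)) (by omega) (-A) (by simp; linarith)
      simp only [hg, hz, mul_zero, sub_zero]
      exact this
    have := hmono ⟨le_rfl, by linarith [ht.1, ht.2]⟩ ht ht.1
    have hgt : 0 ≤ g t := le_trans hgA this
    simp only [hg] at hgt
    have e6 : r - k2 + (i+1) = n + 1 := by omega
    rw [e6]
    linarith

end Compare
/-! ### Algebra of the sharp constant -/

lemma B_eq {r k1 k2 : ℕ} (h12 : k1 < k2) (h2r : k2 < r) {M2 Mr : ℝ}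
    (hM2 : 0 < M2) (hMr : 0 < Mr) :
    ((Nat.factorial (r - k2) : ℝ) ^ (((r : ℝ) - (k1 : ℝ)) / ((r : ℝ) - (k2 : ℝ))) /
        (Nat.factorial (r - k1) : ℝ)) *
      M2 ^ (((r : ℝ) - (k1 : ℝ)) / ((r : ℝ) - (k2 : ℝ))) *
      Mr ^ (((k1 : ℝ) - (k2 : ℝ)) / ((r : ℝ) - (k2 : ℝ)))
    = Mr / (Nat.factorial (r - k1) : ℝ) *
      (((Nat.factorial (r - k2) : ℝ) * M2 / Mr) ^
        (((r - k1 : ℕ) : ℝ) / ((r - k2 : ℕ) : ℝ))) := by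
  have hrk2 : (0:ℝ) < (r:ℝ) - (k2:ℝ) := by
    have : (k2:ℝ) < (r:ℝ) := by exact_mod_cast h2r
    linarith
  set α := ((r : ℝ) - (k1 : ℝ)) / ((r : ℝ) - (k2 : ℝ)) with hα
  have hcast : (((r - k1 : ℕ) : ℝ)) / (((r - k2 : ℕ) : ℝ)) = α := by
    rw [hα, Nat.cast_sub (by omega : k1 ≤ r), Nat.cast_sub (by omega : k2 ≤ r)]
  rw [hcast]
  have hexp2 : ((k1 : ℝ) - (k2 : ℝ)) / ((r : ℝ) - (k2 : ℝ)) = 1 - α := by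
    rw [hα]; field_simp; ring
  rw [hexp2]
  have hfp : (0:ℝ) < (Nat.factorial (r - k2) : ℝ) := by positivity
  have hfq : (0:ℝ) < (Nat.factorial (r - k1) : ℝ) := by positivity
  rw [Real.div_rpow (by positivity) hMr.le, Real.mul_rpow hfp.le hM2.le,
    Real.rpow_sub hMr, Real.rpow_one]
  have hMrα : (0:ℝ) < Mr ^ α := Real.rpow_pos_of_pos hMr α
  field_simp

/-! ### The forward (necessity) direction -/

lemma fwd_dir {r k1 k2 : ℕ} {x : ℝ → ℝ} (h12 : k1 < k2) (h2r : k2 < r)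
    (hx : MemLrr r x) (hMr : 0 < nrm r r x) (hM2 : 0 < nrm r k2 x) :
    nrm r r x / (Nat.factorial (r - k1) : ℝ) *
      (((Nat.factorial (r - k2) : ℝ) * nrm r k2 x / nrm r r x) ^
        (((r - k1 : ℕ) : ℝ) / ((r - k2 : ℕ) : ℝ)))
      ≤ nrm r k1 x := by
  have hr : 2 ≤ r := by omega
  set Mr := nrm r r x with hMrdef
  set M2 := nrm r k2 x with hM2def
  set c := (Nat.factorial (r - k2) : ℝ) * M2 / Mr with hcdef
  have hc : 0 < c := by
    have : (0:ℝ) < (Nat.factorial (r - k2) : ℝ) := by positivity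
    exact div_pos (mul_pos this hM2) hMr
  set A := c ^ (((r - k2 : ℕ) : ℝ))⁻¹ with hAdef
  have hA : 0 ≤ A := (Real.rpow_pos_of_pos hc _).le
  have hp0 : ((r - k2 : ℕ) : ℝ) ≠ 0 := by
    have : (0:ℕ) < r - k2 := by omega
    positivity
  have hpow : ∀ n : ℕ, A ^ n = c ^ ((n : ℝ) / ((r - k2 : ℕ) : ℝ)) := by
    intro n
    rw [hAdef, ← Real.rpow_natCast (c ^ (((r - k2 : ℕ) : ℝ))⁻¹) n, ← Real.rpow_mul hc.le]
    congr 1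
    field_simp
  have hAp : A ^ (r - k2) = c := by
    rw [hpow (r - k2), div_self hp0, Real.rpow_one]
  have hval : iteratedDerivWithin k2 x (Iic 0) 0 =
      Mr / ((r - k2).factorial : ℝ) * A ^ (r - k2) := by
    rw [hAp, hcdef]
    have h1 : M2 = iteratedDerivWithin k2 x (Iic 0) 0 := by
      rw [hM2def, mem_nrm_eq hx hr h2r]
    rw [← h1]
    field_simp
  have hcmp := compare_down h12 h2r hr hx hA hval (k2 - k1) le_rfl 0
    ⟨by linarith, le_rfl⟩
  have e1 : r - k2 + (k2 - k1) = r - k1 := by omega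
  have e2 : k2 - (k2 - k1) = k1 := by omega
  rw [e1, e2, zero_add] at hcmp
  have h2 : iteratedDerivWithin k1 x (Iic 0) 0 = nrm r k1 x :=
    (mem_nrm_eq hx hr (by omega)).symm
  rw [h2] at hcmp
  calc Mr / (Nat.factorial (r - k1) : ℝ) * (c ^ (((r - k1 : ℕ) : ℝ) / ((r - k2 : ℕ) : ℝ)))
      = Mr / (Nat.factorial (r - k1) : ℝ) * A ^ (r - k1) := by rw [hpow (r - k1)]
    _ ≤ nrm r k1 x := hcmp

/-! ### The construction (sufficiency) direction -/

lemma construct_dir {r k1 k2 : ℕ} (h12 : k1 < k2) (h2r : k2 < r)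
    {M1 M2 Mr : ℝ} (hM1 : 0 < M1) (hM2 : 0 < M2) (hMr : 0 < Mr)
    (hineq : Mr / (Nat.factorial (r - k1) : ℝ) *
      (((Nat.factorial (r - k2) : ℝ) * M2 / Mr) ^
        (((r - k1 : ℕ) : ℝ) / ((r - k2 : ℕ) : ℝ))) ≤ M1) :
    ∃ x : ℝ → ℝ, MemLrr r x ∧ nrm r k1 x = M1 ∧ nrm r k2 x = M2 ∧ nrm r r x = Mr := by
  have hr : 2 ≤ r := by omega
  set p := r - k2 with hp
  set q := r - k1 with hq
  have hp1 : 1 ≤ p := by omega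
  have hq1 : p + 1 ≤ q := by omega
  set c2 := (Nat.factorial p : ℝ) * M2 / Mr with hc2
  set c1 := (Nat.factorial q : ℝ) * M1 / Mr with hc1
  have hc2p : 0 < c2 := by
    have : (0:ℝ) < (Nat.factorial p : ℝ) := by positivity
    exact div_pos (mul_pos this hM2) hMr
  have hc1p : 0 < c1 := by
    have : (0:ℝ) < (Nat.factorial q : ℝ) := by positivity
    exact div_pos (mul_pos this hM1) hMr
  have hp0 : ((p : ℕ) : ℝ) ≠ 0 := by positivity
  set aOf := fun b : ℝ => (b ^ p + c2) ^ (((p : ℕ) : ℝ))⁻¹ with haOf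
  have haOf_pos : ∀ b : ℝ, 0 ≤ b → 0 < aOf b := by
    intro b hb
    exact Real.rpow_pos_of_pos (by positivity) _
  have haOf_pow : ∀ b : ℝ, 0 ≤ b → aOf b ^ p = b ^ p + c2 := by
    intro b hb
    rw [haOf, ← Real.rpow_natCast ((b ^ p + c2) ^ (((p : ℕ) : ℝ))⁻¹) p,
      ← Real.rpow_mul (by positivity), inv_mul_cancel₀ hp0, Real.rpow_one]
  have haOf_gt : ∀ b : ℝ, 0 ≤ b → b < aOf b := by
    intro b hb
    by_contra hle
    push_neg at hle
    have h1 : aOf b ^ p ≤ b ^ p := pow_le_pow_left₀ (haOf_pos b hb).le hle p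
    rw [haOf_pow b hb] at h1
    nlinarith [pow_nonneg hb p]
  set ψ := fun b : ℝ => aOf b ^ q - b ^ q with hψ
  have hcont : ContinuousOn ψ (Icc 0 (max 1 (c1 / c2))) := by
    apply ContinuousOn.sub
    · apply ContinuousOn.pow
      apply Continuous.continuousOn
      apply Continuous.rpow_const
      · exact (continuous_pow p).add continuous_const
      · intro b
        right
        positivity
    · exact (continuous_pow q).continuousOn
  set T := max 1 (c1 / c2) with hT
  have hT1 : (1:ℝ) ≤ T := le_max_left _ _
  have hT0 : (0:ℝ) ≤ T := by linarith
  have hψ0 : ψ 0 ≤ c1 := by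
    have h00 : (0:ℝ) ^ p = 0 := zero_pow (by omega)
    have h0q : (0:ℝ) ^ q = 0 := zero_pow (by omega)
    have haux : aOf 0 ^ q = c2 ^ (((q : ℕ) : ℝ) / ((p : ℕ) : ℝ)) := by
      rw [haOf, ← Real.rpow_natCast ((0 ^ p + c2) ^ (((p : ℕ) : ℝ))⁻¹) q,
        ← Real.rpow_mul (by positivity), h00, zero_add]
      congr 1
      field_simp
    have hkey : c2 ^ (((q : ℕ) : ℝ) / ((p : ℕ) : ℝ)) ≤ c1 := by
      have hfq : (0:ℝ) < (Nat.factorial q : ℝ) := by positivity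
      rw [hc1, le_div_iff₀ hMr]
      calc c2 ^ (((q : ℕ) : ℝ) / ((p : ℕ) : ℝ)) * Mr
          = Mr / (Nat.factorial q : ℝ) *
              c2 ^ (((q : ℕ) : ℝ) / ((p : ℕ) : ℝ)) * (Nat.factorial q : ℝ) := by
            field_simp
        _ ≤ M1 * (Nat.factorial q : ℝ) := mul_le_mul_of_nonneg_right hineq hfq.le
        _ = (Nat.factorial q : ℝ) * M1 := by ring
    show aOf 0 ^ q - (0:ℝ) ^ q ≤ c1
    rw [h0q, sub_zero, haux]
    exact hkey
  have hψT : c1 ≤ ψ T := by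
    have hTb : T < aOf T := haOf_gt T hT0
    have h1 : aOf T ^ q = aOf T ^ (q - p) * aOf T ^ p := by
      rw [← pow_add]
      congr 1
      omega
    have h2 : T ^ (q - p) ≤ aOf T ^ (q - p) := pow_le_pow_left₀ hT0 hTb.le _
    have h3 : T ^ q = T ^ (q - p) * T ^ p := by
      rw [← pow_add]
      congr 1
      omega
    have h4 : T ^ (q - p) * c2 ≤ ψ T := by
      show T ^ (q - p) * c2 ≤ aOf T ^ q - T ^ q
      rw [h1, haOf_pow T hT0, h3]
      have h5 : T ^ (q - p) * (T ^ p + c2) - T ^ (q - p) * T ^ p = T ^ (q - p) * c2 := by ring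
      nlinarith [pow_nonneg hT0 p, pow_nonneg hT0 (q - p)]
    have h6 : c1 / c2 ≤ T := le_max_right _ _
    have h7 : T ≤ T ^ (q - p) := by
      calc T = T ^ 1 := (pow_one T).symm
        _ ≤ T ^ (q - p) := pow_le_pow_right₀ hT1 (by omega)
    have h8 : c1 ≤ T ^ (q - p) * c2 := by
      rw [div_le_iff₀ hc2p] at h6
      nlinarith
    linarith
  obtain ⟨b0, hb0mem, hb0⟩ := intermediate_value_Icc hT0 hcont ⟨hψ0, hψT⟩
  have hb0nn : 0 ≤ b0 := hb0mem.1
  set aa := aOf b0 with haa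
  have hab : b0 < aa := haOf_gt b0 hb0nn
  refine ⟨splx aa b0 Mr r, splx_mem hr hb0nn hab hMr, ?_, ?_, splx_nrm_top hr hb0nn hab hMr⟩
  · rw [splx_nrm hr hb0nn hab hMr (by omega : k1 + 1 ≤ r)]
    have : aa ^ (r - k1) - b0 ^ (r - k1) = c1 := hb0
    rw [← hq, this, hc1]
    field_simp
  · rw [splx_nrm hr hb0nn hab hMr (by omega : k2 + 1 ≤ r)]
    have : aa ^ (r - k2) - b0 ^ (r - k2) = c2 := by
      rw [← hp, haa, haOf_pow b0 hb0nn]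
      ring
    rw [← hp, this, hc2]
    field_simp
/-- Olovyanishnikov-type inequality, case `d = 3`: positive numbers
`M_{k_1}, M_{k_2}, M_r` are realized by some `x ∈ L^{r,r}_{∞,∞}(ℝ₋)` iff
`M_{k_1} ≥ ((r-k_2)!^{(r-k_1)/(r-k_2)} / (r-k_1)!) M_{k_2}^{(r-k_1)/(r-k_2)} M_r^{(k_1-k_2)/(r-k_2)}`. -/
theorem stmt_18 (r k1 k2 : ℕ) (h12 : k1 < k2) (h2r : k2 < r)
    (M1 M2 Mr : ℝ) (hM1 : 0 < M1) (hM2 : 0 < M2) (hMr : 0 < Mr) :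
    (∃ x : ℝ → ℝ, MemLrr r x ∧
      nrm r k1 x = M1 ∧ nrm r k2 x = M2 ∧ nrm r r x = Mr) ↔
    ((Nat.factorial (r - k2) : ℝ) ^ (((r : ℝ) - (k1 : ℝ)) / ((r : ℝ) - (k2 : ℝ))) /
        (Nat.factorial (r - k1) : ℝ)) *
      M2 ^ (((r : ℝ) - (k1 : ℝ)) / ((r : ℝ) - (k2 : ℝ))) *
      Mr ^ (((k1 : ℝ) - (k2 : ℝ)) / ((r : ℝ) - (k2 : ℝ))) ≤ M1 := by
  have hr : 2 ≤ r := by omega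
  constructor
  · rintro ⟨x, hmem, e1, e2, e3⟩
    rw [B_eq h12 h2r hM2 hMr, ← e1, ← e2, ← e3]
    exact fwd_dir h12 h2r hmem (by rw [e3]; exact hMr) (by rw [e2]; exact hM2)
  · intro hineq
    rw [B_eq h12 h2r hM2 hMr] at hineq
    exact construct_dir h12 h2r hM1 hM2 hMr hineq
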